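/- Let ε ∈ (0,1), let S be a measurable space, and let κ and μ̃₁ be probability measures on S with μ̃₁ absolutely continuous with respect to κ. Let K > 8/ε be such that κ(A) < 1/K implies μ̃₁(A) < ε/8 for every measurable A ⊂ S, and set δ := ε/(4K). Let C ∈ [0, 1−ε], and for each γ ∈ S let W_γ : [1,∞) → [0,∞) be a concave function with W_γ(1) = C and W_γ(x) ≤ √x for all x ≥ 1, such that γ ↦ W_γ(x) is measurable for each x, γ ↦ ∂₊W_γ(1) (the right derivative at 1) is measurable, and ∫_S ∂₊W_γ(1) dκ(γ) ≤ C/2. Let (ν_γ)_{γ∈S} be a measurable family of probability measures on [1,∞) with ∫_S ν_γ([1, 1+δ]) dμ̃₁(γ) > 1 − ε/4. Then ∫_S ∫_{[1,∞)} (W_γ(x)/√x) dν_γ(x) dμ̃₁(γ) < C + ε. -/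

import Mathlib

open MeasureTheory Set Filter ProbabilityTheory Topology

theorem concave_tangent_line_aux {W : ℝ → ℝ} {D : ℝ}
    (hWconc : ConcaveOn ℝ (Set.Ici 1) W)
    (hD : HasDerivWithinAt W D (Set.Ici 1) 1) :
    ∀ x ∈ Set.Ici (1:ℝ), W x ≤ W 1 + D * (x - 1) := by
  intro x hx
  rcases eq_or_lt_of_le (mem_Ici.mp hx) with h1 | h1
  · simp [← h1]
  have htend : Tendsto (slope W 1) (𝓝[>] 1) (𝓝 D) := by
    have := hasDerivWithinAt_iff_tendsto_slope.mp hD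
    rwa [Set.Ici_sdiff_left] at this
  have hev : ∀ᶠ y in 𝓝[>] (1:ℝ), slope W 1 x ≤ slope W 1 y := by
    have hmem : Set.Iio x ∈ 𝓝[>] (1:ℝ) :=
      mem_nhdsWithin_of_mem_nhds (Iio_mem_nhds h1)
    filter_upwards [hmem, self_mem_nhdsWithin] with y hyx hy1
    have hy1' : (1:ℝ) < y := hy1
    have hs := (hWconc.neg).secant_mono (a := 1) (x := y) (y := x)
      (mem_Ici.mpr le_rfl) (mem_Ici.mpr hy1'.le) hx
      (ne_of_gt hy1') (ne_of_gt h1) (le_of_lt hyx)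
    simp only [Pi.neg_apply] at hs
    rw [slope_def_field, slope_def_field]
    rw [div_le_div_iff₀ (by linarith) (by linarith)] at hs ⊢
    nlinarith [hs]
  have hslope : slope W 1 x ≤ D := ge_of_tendsto htend hev
  rw [slope_def_field, div_le_iff₀ (by linarith)] at hslope
  linarith

/-- The analytic core of Theorem 3.2: the key estimate showing
`⟨μ − δ₀, g⟩ < ε` for bounded `α`-excessive `g` with `g(𝟎) = C ≤ 1 − ε`.
Here `κ, μ̃₁` are probability measures on a measurable space `S` with `μ̃₁ ≪ κ`,
`K > 8/ε` is such that `κ(A) < 1/K` forces `μ̃₁(A) < ε/8`, `δ = ε/(4K)`,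
`W γ` are concave functions on `[1,∞)` with `W γ 1 = C`, `0 ≤ W γ ≤ √·`,
right derivative `D γ` at `1`, `∫ D dκ ≤ C/2`, and `(ν γ)` is a measurable family
of probability measures on `[1,∞)` with `∫ νγ([1,1+δ]) dμ̃₁ > 1 − ε/4`.
Then `∫∫ W γ x / √x dνγ(x) dμ̃₁(γ) < C + ε`. -/
theorem excessive_integral_estimate {S : Type*} [MeasurableSpace S]
    (ε : ℝ) (hε : ε ∈ Set.Ioo (0 : ℝ) 1)
    (κ μ₁ : Measure S) [IsProbabilityMeasure κ] [IsProbabilityMeasure μ₁]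
    (habs : μ₁ ≪ κ)
    (K : ℝ) (hK : 8 / ε < K)
    (hKprop : ∀ A : Set S, MeasurableSet A →
      (κ A).toReal < 1 / K → (μ₁ A).toReal < ε / 8)
    (δ : ℝ) (hδ : δ = ε / (4 * K))
    (C : ℝ) (hC0 : 0 ≤ C) (hC1 : C ≤ 1 - ε)
    (W : S → ℝ → ℝ)
    (hWconc : ∀ γ, ConcaveOn ℝ (Set.Ici 1) (W γ))
    (hW1 : ∀ γ, W γ 1 = C)
    (hWnonneg : ∀ γ, ∀ x ∈ Set.Ici (1 : ℝ), 0 ≤ W γ x)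
    (hWsqrt : ∀ γ, ∀ x ∈ Set.Ici (1 : ℝ), W γ x ≤ Real.sqrt x)
    (hWmeas : ∀ x : ℝ, Measurable fun γ => W γ x)
    (D : S → ℝ)
    (hD : ∀ γ, HasDerivWithinAt (W γ) (D γ) (Set.Ici 1) 1)
    (hDmeas : Measurable D) (hDint : Integrable D κ)
    (hDbound : ∫ γ, D γ ∂κ ≤ C / 2)
    (ν : Kernel S ℝ) [IsMarkovKernel ν]
    (hνsupp : ∀ γ, ν γ (Set.Iio 1) = 0)
    (hconc : 1 - ε / 4 < ∫ γ, (ν γ (Set.Icc 1 (1 + δ))).toReal ∂μ₁) :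
    ∫ γ, (∫ x, W γ x / Real.sqrt x ∂(ν γ)) ∂μ₁ < C + ε := by
  obtain ⟨hε0, hε1⟩ := hε
  have hK0 : (0:ℝ) < K := lt_trans (by positivity) hK
  have hδ0 : 0 < δ := by rw [hδ]; positivity
  -- tangent line bound
  have key : ∀ γ, ∀ x ∈ Set.Ici (1:ℝ), W γ x ≤ C + D γ * (x - 1) := by
    intro γ x hx
    have := concave_tangent_line_aux (hWconc γ) (hD γ) x hx
    rwa [hW1 γ] at this
  -- nonnegativity of D
  have hDpos : ∀ γ, 0 ≤ D γ := by
    intro γ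
    by_contra h
    push_neg at h
    set x : ℝ := 1 + (C + 1) / (-D γ) with hxdef
    have hq : 0 < (C + 1) / (-D γ) := div_pos (by linarith) (by linarith)
    have hx : x ∈ Set.Ici (1:ℝ) := by simp only [hxdef, mem_Ici]; linarith
    have h1 := key γ x hx
    have h2 := hWnonneg γ x hx
    have h3 : D γ * (x - 1) = -(C + 1) := by
      have hne : D γ ≠ 0 := ne_of_lt h
      simp only [hxdef, add_sub_cancel_left, div_neg, mul_neg, mul_div_assoc']
      rw [mul_div_cancel_left₀ _ hne]
    rw [h3] at h1
    linarith
  -- notation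
  set f : S → ℝ := fun γ => (ν γ (Set.Icc 1 (1 + δ))).toReal with hf
  set m : S → ℝ := fun γ => min (C + δ * D γ) 1 with hm
  have hf0 : ∀ γ, 0 ≤ f γ := fun γ => ENNReal.toReal_nonneg
  have hf1 : ∀ γ, f γ ≤ 1 := by
    intro γ
    have h : ν γ (Set.Icc 1 (1 + δ)) ≤ 1 := prob_le_one
    calc f γ ≤ (1 : ENNReal).toReal := ENNReal.toReal_mono ENNReal.one_ne_top h
      _ = 1 := ENNReal.toReal_one
  have hm0 : ∀ γ, 0 ≤ m γ := fun γ =>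
    le_min (by have := hDpos γ; positivity) zero_le_one
  have hm1 : ∀ γ, m γ ≤ 1 := fun γ => min_le_right _ _
  -- a.e. support
  have hae : ∀ γ, ∀ᵐ x ∂(ν γ), (1:ℝ) ≤ x := by
    intro γ
    rw [ae_iff]
    have : {x : ℝ | ¬ (1:ℝ) ≤ x} = Set.Iio 1 := by ext x; simp [not_le]
    rw [this]; exact hνsupp γ
  -- inner integral bound
  have inner_bd : ∀ γ, (∫ x, W γ x / Real.sqrt x ∂(ν γ)) ≤ (m γ - 1) * f γ + 1 := by
    intro γ
    set g : ℝ → ℝ := fun x =>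
      (m γ - 1) * Set.indicator (Set.Iic (1 + δ)) (fun _ => (1:ℝ)) x + 1 with hg
    have hg_int : Integrable g (ν γ) :=
      (((integrable_const (1:ℝ)).indicator measurableSet_Iic).const_mul _).add
        (integrable_const 1)
    have hIic : ν γ (Set.Iic (1 + δ)) = ν γ (Set.Icc 1 (1 + δ)) := by
      apply le_antisymm
      · calc ν γ (Set.Iic (1 + δ)) ≤ ν γ (Set.Iio 1 ∪ Set.Icc 1 (1 + δ)) := by
              apply measure_mono
              intro x hx
              by_cases h : x < 1
              · exact Or.inl h
              · exact Or.inr ⟨not_lt.mp h, hx⟩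
          _ ≤ ν γ (Set.Iio 1) + ν γ (Set.Icc 1 (1 + δ)) := measure_union_le _ _
          _ = ν γ (Set.Icc 1 (1 + δ)) := by rw [hνsupp γ, zero_add]
      · exact measure_mono (fun x hx => hx.2)
    have hg_val : ∫ x, g x ∂(ν γ) = (m γ - 1) * f γ + 1 := by
      rw [hg]
      rw [integral_add (((integrable_const (1:ℝ)).indicator measurableSet_Iic).const_mul _)
        (integrable_const 1), integral_const_mul, integral_indicator_const _ measurableSet_Iic,
        integral_const]
      simp [Measure.real, hIic, hf]
    by_cases hmeas : AEStronglyMeasurable (fun x => W γ x / Real.sqrt x) (ν γ)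
    · have hle : ∀ᵐ x ∂(ν γ), W γ x / Real.sqrt x ≤ g x := by
        filter_upwards [hae γ] with x hx
        have hsx : 1 ≤ Real.sqrt x := by
          rw [show (1:ℝ) = Real.sqrt 1 from Real.sqrt_one.symm]
          exact Real.sqrt_le_sqrt hx
        have h0 : (0:ℝ) < Real.sqrt x := lt_of_lt_of_le one_pos hsx
        have hle1 : W γ x / Real.sqrt x ≤ 1 :=
          (div_le_one h0).mpr (hWsqrt γ x hx)
        by_cases hxδ : x ≤ 1 + δ
        · have hgx : g x = m γ := by
            simp only [hg, Set.indicator_of_mem (mem_Iic.mpr hxδ)]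
            ring
          rw [hgx]
          refine le_min ?_ hle1
          have h2 : W γ x / Real.sqrt x ≤ W γ x := div_le_self (hWnonneg γ x hx) hsx
          have h3 := key γ x hx
          have h4 : D γ * (x - 1) ≤ D γ * δ := by
            apply mul_le_mul_of_nonneg_left (by linarith) (hDpos γ)
          nlinarith
        · have hgx : g x = 1 := by
            have hz : (Set.Iic (1 + δ)).indicator (fun _ => (1:ℝ)) x = 0 :=
              Set.indicator_of_notMem (s := Set.Iic (1 + δ)) (a := x) (by exact hxδ) _
            simp [hg, hz]
          rw [hgx]; exact hle1
      have hint : Integrable (fun x => W γ x / Real.sqrt x) (ν γ) := by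
        refine Integrable.mono' (integrable_const (1:ℝ)) hmeas ?_
        filter_upwards [hae γ] with x hx
        have hsx : 1 ≤ Real.sqrt x := by
          rw [show (1:ℝ) = Real.sqrt 1 from Real.sqrt_one.symm]
          exact Real.sqrt_le_sqrt hx
        have h0 : (0:ℝ) < Real.sqrt x := lt_of_lt_of_le one_pos hsx
        rw [Real.norm_eq_abs, abs_of_nonneg (div_nonneg (hWnonneg γ x hx) h0.le)]
        exact (div_le_one h0).mpr (hWsqrt γ x hx)
      calc ∫ x, W γ x / Real.sqrt x ∂(ν γ) ≤ ∫ x, g x ∂(ν γ) :=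
            integral_mono_ae hint hg_int hle
        _ = (m γ - 1) * f γ + 1 := hg_val
    · rw [integral_undef (fun hi => hmeas hi.1)]
      nlinarith [hm0 γ, hm1 γ, hf0 γ, hf1 γ]
  -- uniform bound on inner integral
  have inner_abs : ∀ γ, ‖∫ x, W γ x / Real.sqrt x ∂(ν γ)‖ ≤ 1 := by
    intro γ
    have h := norm_integral_le_of_norm_le_const (μ := ν γ)
      (f := fun x => W γ x / Real.sqrt x) (C := 1) ?_
    · simpa using h
    · filter_upwards [hae γ] with x hx
      have hsx : 1 ≤ Real.sqrt x := by
        rw [show (1:ℝ) = Real.sqrt 1 from Real.sqrt_one.symm]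
        exact Real.sqrt_le_sqrt hx
      have h0 : (0:ℝ) < Real.sqrt x := lt_of_lt_of_le one_pos hsx
      rw [Real.norm_eq_abs, abs_of_nonneg (div_nonneg (hWnonneg γ x hx) h0.le)]
      exact (div_le_one h0).mpr (hWsqrt γ x hx)
  -- outer estimate
  by_cases hOm : AEStronglyMeasurable (fun γ => ∫ x, W γ x / Real.sqrt x ∂(ν γ)) μ₁
  · -- measurability/integrability of auxiliary functions
    have hf_meas : Measurable f := (ν.measurable_coe measurableSet_Icc).ennreal_toReal
    have hm_meas : Measurable m :=
      (measurable_const.add (hDmeas.const_mul δ)).min measurable_const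
    have hf_int : Integrable f μ₁ := by
      refine Integrable.mono' (integrable_const (1:ℝ)) hf_meas.aestronglyMeasurable ?_
      exact ae_of_all _ fun γ => by
        rw [Real.norm_eq_abs, abs_of_nonneg (hf0 γ)]; exact hf1 γ
    have hm_int : Integrable m μ₁ := by
      refine Integrable.mono' (integrable_const (1:ℝ)) hm_meas.aestronglyMeasurable ?_
      exact ae_of_all _ fun γ => by
        rw [Real.norm_eq_abs, abs_of_nonneg (hm0 γ)]; exact hm1 γ
    have hB_int : Integrable (fun γ => (m γ - 1) * f γ + 1) μ₁ := by
      refine Integrable.add ?_ (integrable_const 1)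
      refine Integrable.mono' (integrable_const (1:ℝ))
        (((hm_meas.sub measurable_const).mul hf_meas).aestronglyMeasurable) ?_
      exact ae_of_all _ fun γ => by
        rw [Real.norm_eq_abs, abs_mul]
        have h1 : |m γ - 1| ≤ 1 := by
          rw [abs_le]; constructor <;> [linarith [hm0 γ]; linarith [hm1 γ]]
        have h2 : |f γ| ≤ 1 := by
          rw [abs_of_nonneg (hf0 γ)]; exact hf1 γ
        nlinarith [abs_nonneg (m γ - 1), abs_nonneg (f γ)]
    have hI_int : Integrable (fun γ => ∫ x, W γ x / Real.sqrt x ∂(ν γ)) μ₁ := by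
      refine Integrable.mono' (integrable_const (1:ℝ)) hOm ?_
      exact ae_of_all _ inner_abs
    have step1 : ∫ γ, (∫ x, W γ x / Real.sqrt x ∂(ν γ)) ∂μ₁ ≤
        ∫ γ, ((m γ - 1) * f γ + 1) ∂μ₁ :=
      integral_mono_ae hI_int hB_int (ae_of_all _ inner_bd)
    -- Markov inequality
    set A : Set S := {γ | K ≤ D γ} with hA
    have hA_meas : MeasurableSet A := measurableSet_le measurable_const hDmeas
    have hκA : (κ A).toReal < 1 / K := by
      have hmk := mul_meas_ge_le_integral_of_nonneg (μ := κ)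
        (ae_of_all _ hDpos) hDint K
      rw [lt_div_iff₀ hK0, mul_comm]
      calc K * (κ A).toReal ≤ ∫ γ, D γ ∂κ := hmk
        _ ≤ C / 2 := hDbound
        _ < 1 := by linarith
    have hμA : (μ₁ A).toReal < ε / 8 := hKprop A hA_meas hκA
    -- bound on ∫ m
    have hm_bd : ∀ γ, m γ ≤ (C + ε / 4) + Set.indicator A (fun _ => (1:ℝ)) γ := by
      intro γ
      by_cases hγ : γ ∈ A
      · rw [Set.indicator_of_mem hγ]
        have := hm1 γ
        linarith
      · rw [Set.indicator_of_notMem hγ, add_zero]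
        have hDK : D γ ≤ K := le_of_lt (lt_of_not_ge hγ)
        have h1 : δ * D γ ≤ δ * K := mul_le_mul_of_nonneg_left hDK hδ0.le
        have h2 : δ * K = ε / 4 := by
          rw [hδ]; field_simp
        exact (min_le_left _ _).trans (by linarith)
    have hind_int : Integrable (Set.indicator A (fun _ => (1:ℝ))) μ₁ :=
      (integrable_const (1:ℝ)).indicator hA_meas
    have hInt_m : ∫ γ, m γ ∂μ₁ ≤ C + ε / 4 + (μ₁ A).toReal := by
      have h1 : ∫ γ, ((C + ε / 4) + Set.indicator A (fun _ => (1:ℝ)) γ) ∂μ₁ =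
          (C + ε / 4) + (μ₁ A).toReal := by
        rw [integral_add (integrable_const _) hind_int, integral_const,
          integral_indicator_const _ hA_meas]
        simp [Measure.real]
      calc ∫ γ, m γ ∂μ₁ ≤ ∫ γ, ((C + ε / 4) + Set.indicator A (fun _ => (1:ℝ)) γ) ∂μ₁ :=
            integral_mono hm_int ((integrable_const _).add hind_int) hm_bd
        _ = C + ε / 4 + (μ₁ A).toReal := h1
    -- final computation
    have step2 : ∫ γ, ((m γ - 1) * f γ + 1) ∂μ₁ ≤
        (∫ γ, m γ ∂μ₁) + 1 - ∫ γ, f γ ∂μ₁ := by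
      have hpt : ∀ γ, (m γ - 1) * f γ + 1 ≤ m γ + 1 - f γ := by
        intro γ
        nlinarith [mul_nonneg (hm0 γ) (sub_nonneg.mpr (hf1 γ))]
      have hm1int : Integrable (fun γ => m γ + 1) μ₁ := hm_int.add (integrable_const 1)
      calc ∫ γ, ((m γ - 1) * f γ + 1) ∂μ₁ ≤ ∫ γ, (m γ + 1 - f γ) ∂μ₁ :=
            integral_mono hB_int (hm1int.sub hf_int) hpt
        _ = (∫ γ, m γ ∂μ₁) + 1 - ∫ γ, f γ ∂μ₁ := by
            rw [integral_sub hm1int hf_int,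
              integral_add hm_int (integrable_const 1), integral_const]
            simp [Measure.real]
    have hintf : 1 - ε / 4 < ∫ γ, f γ ∂μ₁ := hconc
    calc ∫ γ, (∫ x, W γ x / Real.sqrt x ∂(ν γ)) ∂μ₁
        ≤ ∫ γ, ((m γ - 1) * f γ + 1) ∂μ₁ := step1
      _ ≤ (∫ γ, m γ ∂μ₁) + 1 - ∫ γ, f γ ∂μ₁ := step2
      _ ≤ (C + ε / 4 + (μ₁ A).toReal) + 1 - ∫ γ, f γ ∂μ₁ := by linarith
      _ < C + ε := by linarith
  · rw [integral_undef (fun hi => hOm hi.1)]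
    linarith
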